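/- Let M be a d×d matrix of homogeneous linear forms over a field k with det(M) = f₁ · f₂ where f₁, f₂ are coprime homogeneous polynomials of degrees d₁, d₂ (d₁ + d₂ = d). Suppose the adjugate decomposes as M^∨ = f₂N₁ + f₁N₂ where Nα is a matrix of homogeneous polynomials of degree dα − 1. Then M·N₁ = f₁A₁ and M·N₂ = f₂A₂ for constant matrices A₁, A₂ ∈ Mat(d×d, k) satisfying A₁ + A₂ = 1 and A₁A₂ = 0 = A₂A₁. -/
import Mathlib

open MvPolynomial

private lemma aux_comp_mul {σ R : Type*} [CommRing R] {f : MvPolynomial σ R} {a : ℕ}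
    (hf : f.IsHomogeneous a) (q : MvPolynomial σ R) (b : ℕ) :
    homogeneousComponent b (f * q) =
      ∑ j ∈ Finset.range (q.totalDegree + 1),
        if b = a + j then f * homogeneousComponent j q else 0 := by
  conv_lhs => rw [← sum_homogeneousComponent q, Finset.mul_sum, map_sum]
  refine Finset.sum_congr rfl fun j _ => ?_
  exact homogeneousComponent_of_mem
    ((mem_homogeneousSubmodule _ _).2 (hf.mul (homogeneousComponent_isHomogeneous j q)))

private lemma eq_C_mul_of_dvd {σ R : Type*} [CommRing R] [IsDomain R]
    {f p : MvPolynomial σ R} {e : ℕ}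
    (hf : f.IsHomogeneous e) (hp : p.IsHomogeneous e) (hf0 : f ≠ 0) (hdvd : f ∣ p) :
    ∃ c : R, p = MvPolynomial.C c * f := by
  obtain ⟨q, rfl⟩ := hdvd
  have h1 : f * q = homogeneousComponent e (f * q) :=
    ((homogeneousComponent_of_mem ((mem_homogeneousSubmodule _ _).2 hp)).trans
      (if_pos rfl)).symm
  rw [aux_comp_mul hf q e] at h1
  have h2 : ∀ j ∈ Finset.range (q.totalDegree + 1),
      (if e = e + j then f * homogeneousComponent j q else 0) =
      (if j = 0 then f * homogeneousComponent j q else 0) := by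
    intro j _
    exact if_congr (by omega) rfl rfl
  rw [Finset.sum_congr rfl h2, Finset.sum_ite_eq' _ 0 (fun j => f * homogeneousComponent j q),
    if_pos (Finset.mem_range.2 (Nat.succ_pos _))] at h1
  have hq : q = homogeneousComponent 0 q := mul_left_cancel₀ hf0 h1
  refine ⟨MvPolynomial.coeff 0 q, ?_⟩
  calc f * q = f * homogeneousComponent 0 q := by rw [← hq]
    _ = MvPolynomial.C (MvPolynomial.coeff 0 q) * f := by
        rw [homogeneousComponent_zero, mul_comm]

private lemma eq_zero_of_dvd_of_lt {σ R : Type*} [CommRing R]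
    {f p : MvPolynomial σ R} {a b : ℕ}
    (hf : f.IsHomogeneous a) (hp : p.IsHomogeneous b) (hba : b < a) (hdvd : f ∣ p) :
    p = 0 := by
  obtain ⟨q, rfl⟩ := hdvd
  have h1 : f * q = homogeneousComponent b (f * q) :=
    ((homogeneousComponent_of_mem ((mem_homogeneousSubmodule _ _).2 hp)).trans
      (if_pos rfl)).symm
  rw [aux_comp_mul hf q b] at h1
  exact h1.trans (Finset.sum_eq_zero fun j _ => if_neg (by omega))

private lemma degenerate {k : Type*} [Field k] {m d e : ℕ}
    {g h : MvPolynomial (Fin m) k}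
    (hg : g.IsHomogeneous 0) (hh : h.IsHomogeneous e) (he : 1 ≤ e)
    (hg0 : g ≠ 0) (hh0 : h ≠ 0)
    {P Q : Matrix (Fin d) (Fin d) (MvPolynomial (Fin m) k)}
    (hP : ∀ i j, (P i j).IsHomogeneous 1) (hQ : ∀ i j, (Q i j).IsHomogeneous e)
    (heq : h • P + g • Q = (g * h) • (1 : Matrix (Fin d) (Fin d) (MvPolynomial (Fin m) k))) :
    P = 0 ∧ Q = h • ((1 : Matrix (Fin d) (Fin d) k).map MvPolynomial.C) := by
  have entry : ∀ i j, h * P i j + g * Q i j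
      = g * h * (1 : Matrix (Fin d) (Fin d) (MvPolynomial (Fin m) k)) i j := by
    intro i j
    have := congrArg (fun X => X i j) heq
    simpa [Matrix.add_apply, Matrix.smul_apply, smul_eq_mul] using this
  have hδ : ∀ i j, ((1 : Matrix (Fin d) (Fin d) (MvPolynomial (Fin m) k)) i j).IsHomogeneous 0 := by
    intro i j
    by_cases hij : i = j
    · simpa [Matrix.one_apply, hij] using isHomogeneous_C (Fin m) (1 : k)
    · simpa [Matrix.one_apply, hij] using isHomogeneous_zero (Fin m) k 0
  have hP0 : P = 0 := by
    refine Matrix.ext fun i j => ?_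
    have hr : h * P i j = g * h * (1 : Matrix (Fin d) (Fin d) _) i j - g * Q i j :=
      eq_sub_of_add_eq (entry i j)
    have hhom1 : (h * P i j).IsHomogeneous (e + 1) := hh.mul (hP i j)
    have hhom2 : (h * P i j).IsHomogeneous e := by
      rw [hr]
      have h1 : (g * h * (1 : Matrix (Fin d) (Fin d) _) i j).IsHomogeneous e := by
        simpa using (hg.mul hh).mul (hδ i j)
      have h2 : (g * Q i j).IsHomogeneous e := by simpa using hg.mul (hQ i j)
      exact h1.sub h2
    have hz : h * P i j = 0 := by
      by_contra hne
      have := hhom1.inj_right hhom2 hne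
      omega
    have := (mul_eq_zero.mp hz).resolve_left hh0
    simpa using this
  have hQ1 : Q = h • ((1 : Matrix (Fin d) (Fin d) k).map MvPolynomial.C) := by
    have hQ' : Q = h • (1 : Matrix (Fin d) (Fin d) (MvPolynomial (Fin m) k)) := by
      refine Matrix.ext fun i j => ?_
      have hij := entry i j
      rw [hP0] at hij
      simp only [Matrix.zero_apply, mul_zero, zero_add] at hij
      have : g * Q i j = g * (h * (1 : Matrix (Fin d) (Fin d) _) i j) := by
        rw [hij]; ring
      have := mul_left_cancel₀ hg0 this
      simpa [Matrix.smul_apply, smul_eq_mul] using this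
    rw [hQ', Matrix.map_one _ (map_zero MvPolynomial.C) (map_one MvPolynomial.C)]
  exact ⟨hP0, hQ1⟩

/-- for a determinantal representation M of the reducible hypersurface
{f₁f₂ = 0}, a decomposition of the adjugate M^∨ = f₂N₁ + f₁N₂ into homogeneous pieces yields
constant matrices A₁, A₂ with M·Nα = fα·Aα, A₁ + A₂ = 1 and A₁A₂ = 0 = A₂A₁. -/
theorem stmt15 {k : Type*} [Field k] [IsAlgClosed k] [CharZero k] {n d d₁ d₂ : ℕ}
    (M : Matrix (Fin d) (Fin d) (MvPolynomial (Fin (n + 1)) k))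
    (hlin : ∀ i j, (M i j).IsHomogeneous 1)
    (f₁ f₂ : MvPolynomial (Fin (n + 1)) k)
    (hf₁ : f₁.IsHomogeneous d₁) (hf₂ : f₂.IsHomogeneous d₂)
    (hf₁0 : f₁ ≠ 0) (hf₂0 : f₂ ≠ 0) (hdd : d₁ + d₂ = d)
    (hcop : ∀ p : MvPolynomial (Fin (n + 1)) k, p ∣ f₁ → p ∣ f₂ → IsUnit p)
    (hdet : M.det = f₁ * f₂)
    (N₁ N₂ : Matrix (Fin d) (Fin d) (MvPolynomial (Fin (n + 1)) k))
    (hN₁ : ∀ i j, (N₁ i j).IsHomogeneous (d₁ - 1))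
    (hN₂ : ∀ i j, (N₂ i j).IsHomogeneous (d₂ - 1))
    (hadj : M.adjugate = f₂ • N₁ + f₁ • N₂) :
    ∃ A₁ A₂ : Matrix (Fin d) (Fin d) k,
      M * N₁ = f₁ • (A₁.map MvPolynomial.C) ∧
      M * N₂ = f₂ • (A₂.map MvPolynomial.C) ∧
      A₁ + A₂ = 1 ∧ A₁ * A₂ = 0 ∧ A₂ * A₁ = 0 := by
  classical
  have hrel : IsRelPrime f₁ f₂ := fun p hp1 hp2 => hcop p hp1 hp2
  have key : f₂ • (M * N₁) + f₁ • (M * N₂)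
      = (f₁ * f₂) • (1 : Matrix (Fin d) (Fin d) (MvPolynomial (Fin (n + 1)) k)) := by
    have h := M.mul_adjugate
    rw [hadj, hdet, Matrix.mul_add, Matrix.mul_smul, Matrix.mul_smul] at h
    exact h
  have key' : f₂ • (N₁ * M) + f₁ • (N₂ * M)
      = (f₁ * f₂) • (1 : Matrix (Fin d) (Fin d) (MvPolynomial (Fin (n + 1)) k)) := by
    have h := M.adjugate_mul
    rw [hadj, hdet, Matrix.add_mul, Matrix.smul_mul, Matrix.smul_mul] at h
    exact h
  have entry : ∀ i j, f₂ * (M * N₁) i j + f₁ * (M * N₂) i j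
      = f₁ * f₂ * (1 : Matrix (Fin d) (Fin d) (MvPolynomial (Fin (n + 1)) k)) i j := by
    intro i j
    have := congrArg (fun X => X i j) key
    simpa [Matrix.add_apply, Matrix.smul_apply, smul_eq_mul] using this
  have entry' : ∀ i j, f₂ * (N₁ * M) i j + f₁ * (N₂ * M) i j
      = f₁ * f₂ * (1 : Matrix (Fin d) (Fin d) (MvPolynomial (Fin (n + 1)) k)) i j := by
    intro i j
    have := congrArg (fun X => X i j) key'
    simpa [Matrix.add_apply, Matrix.smul_apply, smul_eq_mul] using this
  rcases Nat.eq_zero_or_pos d₁ with hd1 | hd1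
  · rcases Nat.eq_zero_or_pos d₂ with hd2 | hd2
    · -- d = 0 : everything trivial
      have hd0 : d = 0 := by omega
      refine ⟨1, 0, ?_, ?_, by simp, by simp, by simp⟩ <;>
        · ext i j
          exact absurd i.isLt (by omega)
    · -- d₁ = 0
      have hP : ∀ i j, ((M * N₁) i j).IsHomogeneous 1 := by
        intro i j
        rw [Matrix.mul_apply]
        refine MvPolynomial.IsHomogeneous.sum _ _ _ fun l _ => ?_
        have := (hlin i l).mul (hN₁ l j)
        rwa [show 1 + (d₁ - 1) = 1 by omega] at this
      have hQ : ∀ i j, ((M * N₂) i j).IsHomogeneous d₂ := by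
        intro i j
        rw [Matrix.mul_apply]
        refine MvPolynomial.IsHomogeneous.sum _ _ _ fun l _ => ?_
        have := (hlin i l).mul (hN₂ l j)
        rwa [show 1 + (d₂ - 1) = d₂ by omega] at this
      obtain ⟨hP0, hQ1⟩ := degenerate (hd1 ▸ hf₁) hf₂ hd2 hf₁0 hf₂0 hP hQ key
      exact ⟨0, 1, by simp [hP0], hQ1, by simp, by simp, by simp⟩
  · rcases Nat.eq_zero_or_pos d₂ with hd2 | hd2
    · -- d₂ = 0
      have hP : ∀ i j, ((M * N₂) i j).IsHomogeneous 1 := by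
        intro i j
        rw [Matrix.mul_apply]
        refine MvPolynomial.IsHomogeneous.sum _ _ _ fun l _ => ?_
        have := (hlin i l).mul (hN₂ l j)
        rwa [show 1 + (d₂ - 1) = 1 by omega] at this
      have hQ : ∀ i j, ((M * N₁) i j).IsHomogeneous d₁ := by
        intro i j
        rw [Matrix.mul_apply]
        refine MvPolynomial.IsHomogeneous.sum _ _ _ fun l _ => ?_
        have := (hlin i l).mul (hN₁ l j)
        rwa [show 1 + (d₁ - 1) = d₁ by omega] at this
      have key2 : f₁ • (M * N₂) + f₂ • (M * N₁)
          = (f₂ * f₁) • (1 : Matrix (Fin d) (Fin d) (MvPolynomial (Fin (n + 1)) k)) := by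
        calc f₁ • (M * N₂) + f₂ • (M * N₁) = f₂ • (M * N₁) + f₁ • (M * N₂) := add_comm _ _
          _ = (f₁ * f₂) • 1 := key
          _ = (f₂ * f₁) • 1 := by rw [mul_comm]
      obtain ⟨hP0, hQ1⟩ := degenerate (hd2 ▸ hf₂) hf₁ hd1 hf₂0 hf₁0 hP hQ key2
      exact ⟨1, 0, hQ1, by simp [hP0], by simp, by simp, by simp⟩
    · -- main case : d₁ ≥ 1 and d₂ ≥ 1
      have hP : ∀ i j, ((M * N₁) i j).IsHomogeneous d₁ := by
        intro i j
        rw [Matrix.mul_apply]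
        refine MvPolynomial.IsHomogeneous.sum _ _ _ fun l _ => ?_
        have := (hlin i l).mul (hN₁ l j)
        rwa [show 1 + (d₁ - 1) = d₁ by omega] at this
      have hQ : ∀ i j, ((M * N₂) i j).IsHomogeneous d₂ := by
        intro i j
        rw [Matrix.mul_apply]
        refine MvPolynomial.IsHomogeneous.sum _ _ _ fun l _ => ?_
        have := (hlin i l).mul (hN₂ l j)
        rwa [show 1 + (d₂ - 1) = d₂ by omega] at this
      have hA1ex : ∀ i j, ∃ c : k, (M * N₁) i j = MvPolynomial.C c * f₁ := by
        intro i j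
        have hdvd : f₁ ∣ (M * N₁) i j := by
          refine hrel.dvd_of_dvd_mul_left ⟨f₂ * (1 : Matrix (Fin d) (Fin d) _) i j - (M * N₂) i j, ?_⟩
          linear_combination entry i j
        exact eq_C_mul_of_dvd hf₁ (hP i j) hf₁0 hdvd
      have hA2ex : ∀ i j, ∃ c : k, (M * N₂) i j = MvPolynomial.C c * f₂ := by
        intro i j
        have hdvd : f₂ ∣ (M * N₂) i j := by
          refine hrel.symm.dvd_of_dvd_mul_left
            ⟨f₁ * (1 : Matrix (Fin d) (Fin d) _) i j - (M * N₁) i j, ?_⟩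
          linear_combination entry i j
        exact eq_C_mul_of_dvd hf₂ (hQ i j) hf₂0 hdvd
      choose A₁ hA₁ using hA1ex
      choose A₂ hA₂ using hA2ex
      have hMN₁ : M * N₁ = f₁ • ((Matrix.of A₁).map MvPolynomial.C) := by
        refine Matrix.ext fun i j => ?_
        rw [Matrix.smul_apply, Matrix.map_apply, Matrix.of_apply, smul_eq_mul, hA₁ i j,
          mul_comm]
      have hMN₂ : M * N₂ = f₂ • ((Matrix.of A₂).map MvPolynomial.C) := by
        refine Matrix.ext fun i j => ?_
        rw [Matrix.smul_apply, Matrix.map_apply, Matrix.of_apply, smul_eq_mul, hA₂ i j,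
          mul_comm]
      have hδ : ∀ i j, (1 : Matrix (Fin d) (Fin d) (MvPolynomial (Fin (n + 1)) k)) i j
          = MvPolynomial.C ((1 : Matrix (Fin d) (Fin d) k) i j) := by
        intro i j
        by_cases hij : i = j <;> simp [Matrix.one_apply, hij]
      have hsum : Matrix.of A₁ + Matrix.of A₂ = 1 := by
        refine Matrix.ext fun i j => ?_
        have hij := entry i j
        rw [hA₁ i j, hA₂ i j, hδ i j] at hij
        have hc : (MvPolynomial.C ((A₁ i j + A₂ i j)) : MvPolynomial (Fin (n + 1)) k)
            = MvPolynomial.C ((1 : Matrix (Fin d) (Fin d) k) i j) := by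
          refine mul_left_cancel₀ (mul_ne_zero hf₁0 hf₂0) ?_
          rw [map_add]
          linear_combination hij
        have := MvPolynomial.C_injective _ _ hc
        simpa [Matrix.add_apply, Matrix.of_apply] using this
      have hRex : ∀ i j, ∃ r, (N₁ * M) i j = f₁ * r := by
        intro i j
        refine hrel.dvd_of_dvd_mul_left ⟨f₂ * (1 : Matrix (Fin d) (Fin d) _) i j - (N₂ * M) i j, ?_⟩
        linear_combination entry' i j
      choose R₁ hR₁ using hRex
      have hN₁M : N₁ * M = f₁ • Matrix.of R₁ := by
        refine Matrix.ext fun i j => ?_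
        simpa [Matrix.smul_apply, smul_eq_mul] using hR₁ i j
      set CA₁ : Matrix (Fin d) (Fin d) (MvPolynomial (Fin (n + 1)) k)
        := (Matrix.of A₁).map MvPolynomial.C with hCA₁
      set CA₂ : Matrix (Fin d) (Fin d) (MvPolynomial (Fin (n + 1)) k)
        := (Matrix.of A₂).map MvPolynomial.C with hCA₂
      have hzero : N₁ * CA₂ = 0 := by
        have hassoc : f₂ • (N₁ * CA₂) = f₁ • (Matrix.of R₁ * N₂) := by
          calc f₂ • (N₁ * CA₂)
              = N₁ * (f₂ • CA₂) := (Matrix.mul_smul _ _ _).symm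
            _ = N₁ * (M * N₂) := by rw [← hMN₂]
            _ = (N₁ * M) * N₂ := (Matrix.mul_assoc _ _ _).symm
            _ = (f₁ • Matrix.of R₁) * N₂ := by rw [hN₁M]
            _ = f₁ • (Matrix.of R₁ * N₂) := Matrix.smul_mul _ _ _
        refine Matrix.ext fun i j => ?_
        have hij : f₂ * (N₁ * CA₂) i j = f₁ * (Matrix.of R₁ * N₂) i j := by
          have := congrArg (fun X => X i j) hassoc
          simpa [Matrix.smul_apply, smul_eq_mul] using this
        have hdvd : f₁ ∣ (N₁ * CA₂) i j := hrel.dvd_of_dvd_mul_left ⟨_, hij⟩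
        have hhom : ((N₁ * CA₂) i j).IsHomogeneous (d₁ - 1) := by
          rw [Matrix.mul_apply]
          refine MvPolynomial.IsHomogeneous.sum _ _ _ fun l _ => ?_
          have := (hN₁ i l).mul (isHomogeneous_C (Fin (n + 1)) (A₂ l j))
          simpa [hCA₂, Matrix.map_apply, Matrix.of_apply, add_zero] using this
        have := eq_zero_of_dvd_of_lt hf₁ hhom (by omega) hdvd
        simpa using this
      have hprod : Matrix.of A₁ * Matrix.of A₂ = 0 := by
        have h0 : f₁ • (CA₁ * CA₂) = 0 := by
          calc f₁ • (CA₁ * CA₂)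
              = (f₁ • CA₁) * CA₂ := (Matrix.smul_mul _ _ _).symm
            _ = (M * N₁) * CA₂ := by rw [hMN₁]
            _ = M * (N₁ * CA₂) := Matrix.mul_assoc _ _ _
            _ = 0 := by rw [hzero, Matrix.mul_zero]
        refine Matrix.ext fun i j => ?_
        have hij : f₁ * (CA₁ * CA₂) i j = 0 := by
          have := congrArg (fun X => X i j) h0
          simpa [Matrix.smul_apply, smul_eq_mul] using this
        have h2 : (CA₁ * CA₂) i j = 0 := (mul_eq_zero.mp hij).resolve_left hf₁0
        rw [hCA₁, hCA₂, ← Matrix.map_mul] at h2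
        simpa [Matrix.map_apply] using h2
      have hsq : Matrix.of A₁ * Matrix.of A₁ = Matrix.of A₁ := by
        have h1 : Matrix.of A₁ * (Matrix.of A₁ + Matrix.of A₂) = Matrix.of A₁ * 1 := by
          rw [hsum]
        rwa [mul_add, hprod, add_zero, mul_one] at h1
      have hprod' : Matrix.of A₂ * Matrix.of A₁ = 0 := by
        have hA2eq : Matrix.of A₂ = 1 - Matrix.of A₁ := eq_sub_of_add_eq' hsum
        rw [hA2eq, sub_mul, one_mul, hsq, sub_self]
      exact ⟨Matrix.of A₁, Matrix.of A₂, hMN₁, hMN₂, hsum, hprod, hprod'⟩
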